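/- Fix ε > 0, β = (β₀, β_N, β_C) ∈ ℝ^{n+k+1}, and data points ξⁱ = (xⁱ, zⁱ, yⁱ) ∈ Ξ for i ∈ [N]. Then sup{ E_Q[l_β] : Q ∈ B_ε(P̂_N) } equals the supremum of (1/N)∑_{i=1}^N ∫_Ξ l_β dQⁱ over all N-tuples of probability measures Q¹, …, Qᴺ on Ξ satisfying (1/N)∑_{i=1}^N ∫_Ξ d(ξ, ξⁱ) dQⁱ(ξ) ≤ ε. -/

import Mathlib

open scoped BigOperators ENNReal NNReal
open MeasureTheory

noncomputable section

namespace DRLR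

/-- `catCube s` is the one-hot encoding set `C(s) = {z ∈ {0,1}^{s-1} : ∑ z_j ≤ 1}`
of a categorical feature with `s` possible values. -/
def catCube (s : ℕ) : Set (Fin (s - 1) → ℝ) :=
  {z | (∀ i, z i = 0 ∨ z i = 1) ∧ ∑ i, z i ≤ 1}

variable (n m : ℕ) (k : Fin m → ℕ)

/-- Ambient space containing the categorical block `C = C(k₁) × ⋯ × C(k_m)`. -/
abbrev CatSpace := (j : Fin m) → Fin (k j - 1) → ℝ

/-- The predicate `z ∈ C`. -/
def memCat (z : CatSpace m k) : Prop := ∀ j, z j ∈ catCube (k j)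

/-- Ambient feature-label space `ℝⁿ × (ambient categorical space) × ℝ`. -/
abbrev Amb := (Fin n → ℝ) × CatSpace m k × ℝ

/-- The feature-label support `Ξ = ℝⁿ × C × {-1, +1}` as a subset of the ambient space. -/
def XiSet : Set (Amb n m k) :=
  {ξ | memCat m k ξ.2.1 ∧ (ξ.2.2 = -1 ∨ ξ.2.2 = 1)}

/-- `Ξ` as a (measurable) type. -/
abbrev Xi := {ξ : Amb n m k // ξ ∈ XiSet n m k}

/-- The categorical metric `d_C(z, z') = (∑_j 1[z_j ≠ z'_j])^{1/p}`. -/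
def dCat (p : ℝ) (z z' : CatSpace m k) : ℝ :=
  (({j | z j ≠ z' j}.ncard : ℝ)) ^ (1 / p)

/-- The ground metric
`d(ξ, ξ') = ‖x - x'‖ + d_C(z, z') + κ·1[y ≠ y']` on the ambient space. -/
def gdist (nrm : (Fin n → ℝ) → ℝ) (κ p : ℝ) (ξ ξ' : Amb n m k) : ℝ :=
  nrm (ξ.1 - ξ'.1) + dCat m k p ξ.2.1 ξ'.2.1 + κ * (if ξ.2.2 ≠ ξ'.2.2 then 1 else 0)

/-- The log-loss `l_β(x, z, y) = log (1 + exp (-y·(β₀ + β_Nᵀx + β_Cᵀz)))`. -/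
def logloss (β₀ : ℝ) (βN : Fin n → ℝ) (βC : CatSpace m k) (ξ : Amb n m k) : ℝ :=
  Real.log (1 + Real.exp
    (-(ξ.2.2 * (β₀ + ∑ i, βN i * ξ.1 i + ∑ j, ∑ i, βC j i * ξ.2.1 j i))))

/-- The empirical distribution `P̂_N = (1/N) ∑ᵢ δ_{ξⁱ}`. -/
def empMeasure (N : ℕ) (ξdata : Fin N → Xi n m k) : Measure (Xi n m k) :=
  (N : ℝ≥0∞)⁻¹ • ∑ i, Measure.dirac (ξdata i)

/-- Couplings of two probability measures on `Ξ`. -/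
def couplings (Q P : Measure (Xi n m k)) : Set (Measure (Xi n m k × Xi n m k)) :=
  {π | IsProbabilityMeasure π ∧ π.fst = Q ∧ π.snd = P}

/-- The type-1 Wasserstein distance on probability measures over `Ξ`. -/
def wass (nrm : (Fin n → ℝ) → ℝ) (κ p : ℝ) (Q P : Measure (Xi n m k)) : ℝ≥0∞ :=
  ⨅ π ∈ couplings n m k Q P,
    ∫⁻ q, ENNReal.ofReal (gdist n m k nrm κ p q.1.1 q.2.1) ∂π

/-- Expected log-loss (as an extended nonnegative real). -/
def expLoss (β₀ : ℝ) (βN : Fin n → ℝ) (βC : CatSpace m k) (Q : Measure (Xi n m k)) : ℝ≥0∞ :=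
  ∫⁻ ξ, ENNReal.ofReal (logloss n m k β₀ βN βC ξ.1) ∂Q

/-- Worst-case expected log-loss over the Wasserstein ball `B_ε(P̂_N)`. -/
def worstCase (nrm : (Fin n → ℝ) → ℝ) (κ p ε : ℝ) (β₀ : ℝ) (βN : Fin n → ℝ)
    (βC : CatSpace m k) (N : ℕ) (ξdata : Fin N → Xi n m k) : ℝ≥0∞ :=
  sSup {t : ℝ≥0∞ | ∃ Q : Measure (Xi n m k), IsProbabilityMeasure Q ∧
    wass n m k nrm κ p Q (empMeasure n m k N ξdata) ≤ ENNReal.ofReal ε ∧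
    t = expLoss n m k β₀ βN βC Q}

/-- The dual norm `‖γ‖_* = sup {γᵀw : nrm w ≤ 1}`. -/
def dualNorm (nrm : (Fin n → ℝ) → ℝ) (γ : Fin n → ℝ) : ℝ :=
  sSup {t : ℝ | ∃ w : Fin n → ℝ, nrm w ≤ 1 ∧ t = ∑ i, γ i * w i}

/-- Feasibility of `(λ, s)` in the dual reformulation for fixed `β`. -/
def feasibleDual (nrm : (Fin n → ℝ) → ℝ) (κ p : ℝ) (β₀ : ℝ) (βN : Fin n → ℝ)
    (βC : CatSpace m k) (N : ℕ) (ξdata : Fin N → Xi n m k)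
    (lam : ℝ) (s : Fin N → ℝ) : Prop :=
  dualNorm n nrm βN ≤ lam ∧
  ∀ i : Fin N, ∀ z : CatSpace m k, memCat m k z →
    (logloss n m k β₀ βN βC ((ξdata i).1.1, z, (ξdata i).1.2.2)
        - lam * dCat m k p z (ξdata i).1.2.1 ≤ s i) ∧
    (logloss n m k β₀ βN βC ((ξdata i).1.1, z, -(ξdata i).1.2.2)
        - lam * κ - lam * dCat m k p z (ξdata i).1.2.1 ≤ s i)

end DRLR


namespace DRLRAux
open DRLR

variable {n m : ℕ} {k : Fin m → ℕ}

section Nrm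
variable {nrm : (Fin n → ℝ) → ℝ}

lemma nrm_zero (hnrm_def : ∀ w, nrm w = 0 ↔ w = 0) : nrm 0 = 0 := (hnrm_def 0).mpr rfl

lemma nrm_nonneg (hnrm_def : ∀ w, nrm w = 0 ↔ w = 0)
    (hnrm_smul : ∀ (c : ℝ) (w : Fin n → ℝ), nrm (c • w) = |c| * nrm w)
    (hnrm_add : ∀ w w', nrm (w + w') ≤ nrm w + nrm w') (w : Fin n → ℝ) : 0 ≤ nrm w := by
  have h1 : nrm ((-1 : ℝ) • w) = nrm w := by rw [hnrm_smul]; simp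
  have h2 : nrm 0 ≤ nrm w + nrm ((-1 : ℝ) • w) := by
    have := hnrm_add w ((-1 : ℝ) • w)
    simpa using this
  rw [nrm_zero hnrm_def, h1] at h2
  linarith

lemma nrm_sum_le (hnrm_def : ∀ w, nrm w = 0 ↔ w = 0)
    (hnrm_add : ∀ w w', nrm (w + w') ≤ nrm w + nrm w')
    {ι : Type*} (s : Finset ι) (f : ι → (Fin n → ℝ)) :
    nrm (∑ i ∈ s, f i) ≤ ∑ i ∈ s, nrm (f i) := by
  classical
  induction s using Finset.induction with
  | empty => simp [nrm_zero hnrm_def]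
  | @insert _ _ hx ih =>
    rw [Finset.sum_insert hx, Finset.sum_insert hx]
    exact le_trans (hnrm_add _ _) (by linarith)

lemma nrm_continuous (hnrm_def : ∀ w, nrm w = 0 ↔ w = 0)
    (hnrm_smul : ∀ (c : ℝ) (w : Fin n → ℝ), nrm (c • w) = |c| * nrm w)
    (hnrm_add : ∀ w w', nrm (w + w') ≤ nrm w + nrm w') : Continuous nrm := by
  classical
  set e : Fin n → (Fin n → ℝ) := fun i => fun j => if i = j then 1 else 0 with he
  set K : ℝ := ∑ i, nrm (e i) with hK
  have hle : ∀ u : Fin n → ℝ, nrm u ≤ ∑ i, |u i| * nrm (e i) := by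
    intro u
    calc nrm u = nrm (∑ i, u i • e i) := by rw [← pi_eq_sum_univ u]
    _ ≤ ∑ i, nrm (u i • e i) := nrm_sum_le hnrm_def hnrm_add _ _
    _ = ∑ i, |u i| * nrm (e i) := by simp [hnrm_smul]
  have hlip : ∀ u v : Fin n → ℝ, |nrm u - nrm v| ≤ K * dist u v := by
    intro u v
    have tri : ∀ a b : Fin n → ℝ, nrm a - nrm b ≤ nrm (a - b) := by
      intro a b
      have := hnrm_add (a - b) b
      simpa using this
    have bound : ∀ a b : Fin n → ℝ, nrm (a - b) ≤ K * dist a b := by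
      intro a b
      refine le_trans (hle (a - b)) ?_
      rw [hK, Finset.sum_mul]
      refine Finset.sum_le_sum fun i _ => ?_
      have h1 : |(a - b) i| ≤ dist a b := by
        have := dist_le_pi_dist a b i
        rwa [Real.dist_eq] at this
      have h2 : 0 ≤ nrm (e i) := nrm_nonneg hnrm_def hnrm_smul hnrm_add _
      calc |(a - b) i| * nrm (e i) ≤ dist a b * nrm (e i) :=
            mul_le_mul_of_nonneg_right h1 h2
        _ = nrm (e i) * dist a b := by ring
    rw [abs_sub_le_iff]
    constructor
    · exact le_trans (tri u v) (bound u v)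
    · refine le_trans (tri v u) (le_trans (bound v u) (le_of_eq ?_))
      rw [dist_comm]
  have hl : LipschitzWith K.toNNReal nrm := by
    apply LipschitzWith.of_dist_le_mul
    intro x y
    rw [Real.dist_eq]
    refine le_trans (hlip x y) ?_
    gcongr
    exact Real.le_coe_toNNReal K
  exact hl.continuous

end Nrm

lemma dCat_eq (p : ℝ) (z z' : CatSpace m k) :
    dCat m k p z z' = ((∑ j, if z j = z' j then (0:ℝ) else 1)) ^ (1 / p) := by
  classical
  rw [dCat]
  congr 1
  have h : ({j | z j ≠ z' j} : Set (Fin m)) = ↑(Finset.univ.filter fun j => z j ≠ z' j) := by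
    ext j; simp
  rw [h, Set.ncard_coe_finset, Finset.card_filter]
  push_cast
  congr 1
  ext j
  by_cases h : z j = z' j <;> simp [h]

lemma dCat_self (p : ℝ) (hp : p ≠ 0) (z : CatSpace m k) : dCat m k p z z = 0 := by
  rw [dCat_eq]
  have h0 : (∑ j, if z j = z j then (0:ℝ) else 1) = 0 := by simp
  rw [h0]
  exact Real.zero_rpow (one_div_ne_zero hp)

lemma gdist_self (nrm : (Fin n → ℝ) → ℝ) (hnrm0 : nrm 0 = 0) (κ p : ℝ) (hp : p ≠ 0)
    (ξ : Amb n m k) : gdist n m k nrm κ p ξ ξ = 0 := by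
  rw [gdist, dCat_self p hp]
  simp [hnrm0]

lemma measurable_dCat_pair (p : ℝ) (hp : 0 < p) :
    Measurable (fun q : Amb n m k × Amb n m k => dCat m k p q.1.2.1 q.2.2.1) := by
  classical
  simp only [dCat_eq]
  apply (Real.continuous_rpow_const (by positivity : (0:ℝ) ≤ 1/p)).measurable.comp
  apply Finset.measurable_sum
  intro j _
  have hset : MeasurableSet {q : Amb n m k × Amb n m k | q.1.2.1 j = q.2.2.1 j} := by
    apply measurableSet_eq_fun
    · exact (measurable_pi_apply j).comp (measurable_fst.snd.fst)
    · exact (measurable_pi_apply j).comp (measurable_snd.snd.fst)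
  exact Measurable.ite hset measurable_const measurable_const

lemma measurable_gdist_pair (nrm : (Fin n → ℝ) → ℝ) (hc : Continuous nrm) (κ p : ℝ)
    (hp : 0 < p) :
    Measurable (fun q : Amb n m k × Amb n m k =>
      ENNReal.ofReal (gdist n m k nrm κ p q.1 q.2)) := by
  apply Measurable.ennreal_ofReal
  simp only [gdist]
  apply Measurable.add
  apply Measurable.add
  · exact (hc.comp (continuous_fst.fst.sub continuous_snd.fst)).measurable
  · exact measurable_dCat_pair p hp
  · apply Measurable.const_mul
    have hset : MeasurableSet {q : Amb n m k × Amb n m k | q.1.2.2 = q.2.2.2} := by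
      apply measurableSet_eq_fun
      · exact measurable_fst.snd.snd
      · exact measurable_snd.snd.snd
    have hrw : (fun q : Amb n m k × Amb n m k => (if q.1.2.2 ≠ q.2.2.2 then (1:ℝ) else 0))
        = fun q => if q.1.2.2 = q.2.2.2 then (0:ℝ) else 1 := by
      ext q; by_cases h : q.1.2.2 = q.2.2.2 <;> simp [h]
    rw [hrw]
    exact Measurable.ite hset measurable_const measurable_const

lemma measurable_logloss (β₀ : ℝ) (βN : Fin n → ℝ) (βC : CatSpace m k) :
    Measurable (fun ξ : Amb n m k => ENNReal.ofReal (logloss n m k β₀ βN βC ξ)) := by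
  have hcont : Continuous (fun ξ : Amb n m k =>
      1 + Real.exp (-(ξ.2.2 * (β₀ + ∑ i, βN i * ξ.1 i + ∑ j, ∑ i, βC j i * ξ.2.1 j i)))) := by
    fun_prop
  have hm : Measurable (logloss n m k β₀ βN βC) := Measurable.log hcont.measurable
  exact hm.ennreal_ofReal

lemma fst_finset_sum {α β : Type*} [MeasurableSpace α] [MeasurableSpace β]
    {ι : Type*} (s : Finset ι) (μ : ι → MeasureTheory.Measure (α × β)) :
    (∑ i ∈ s, μ i).fst = ∑ i ∈ s, (μ i).fst := by
  classical
  induction s using Finset.induction with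
  | empty => simp
  | @insert _ _ hx ih => rw [Finset.sum_insert hx, Finset.sum_insert hx, Measure.fst_add, ih]

lemma snd_finset_sum {α β : Type*} [MeasurableSpace α] [MeasurableSpace β]
    {ι : Type*} (s : Finset ι) (μ : ι → MeasureTheory.Measure (α × β)) :
    (∑ i ∈ s, μ i).snd = ∑ i ∈ s, (μ i).snd := by
  classical
  induction s using Finset.induction with
  | empty => simp
  | @insert _ _ hx ih => rw [Finset.sum_insert hx, Finset.sum_insert hx, Measure.snd_add, ih]

lemma fst_smul {α β : Type*} [MeasurableSpace α] [MeasurableSpace β]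
    (c : ℝ≥0∞) (μ : MeasureTheory.Measure (α × β)) : (c • μ).fst = c • μ.fst := by
  rw [Measure.fst, Measure.fst, Measure.map_smul]

lemma snd_smul {α β : Type*} [MeasurableSpace α] [MeasurableSpace β]
    (c : ℝ≥0∞) (μ : MeasureTheory.Measure (α × β)) : (c • μ).snd = c • μ.snd := by
  rw [Measure.snd, Measure.snd, Measure.map_smul]

end DRLRAux

open DRLR in
/-- the worst-case expected log-loss over the Wasserstein ball `B_ε(P̂_N)` equals
the supremum of `(1/N) ∑ᵢ ∫ l_β dQⁱ` over all `N`-tuples of probability measures `Q¹, …, Qᴺ`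
on `Ξ` satisfying `(1/N) ∑ᵢ ∫ d(ξ, ξⁱ) dQⁱ(ξ) ≤ ε`. -/
theorem worst_case_decomposition
    (n m : ℕ) (k : Fin m → ℕ) (hk : ∀ j, 2 ≤ k j)
    (nrm : (Fin n → ℝ) → ℝ)
    (hnrm_def : ∀ w, nrm w = 0 ↔ w = 0)
    (hnrm_smul : ∀ (c : ℝ) (w : Fin n → ℝ), nrm (c • w) = |c| * nrm w)
    (hnrm_add : ∀ w w', nrm (w + w') ≤ nrm w + nrm w')
    (κ p : ℝ) (hκ : 0 < κ) (hp : 0 < p)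
    (ε : ℝ) (hε : 0 < ε)
    (β₀ : ℝ) (βN : Fin n → ℝ) (βC : CatSpace m k)
    (N : ℕ) (hN : 0 < N) (ξdata : Fin N → Xi n m k) :
    worstCase n m k nrm κ p ε β₀ βN βC N ξdata =
      sSup {t : ℝ≥0∞ | ∃ Q : Fin N → MeasureTheory.Measure (Xi n m k),
        (∀ i, MeasureTheory.IsProbabilityMeasure (Q i)) ∧
        (N : ℝ≥0∞)⁻¹ *
            ∑ i, ∫⁻ ξ, ENNReal.ofReal (gdist n m k nrm κ p ξ.1 (ξdata i).1) ∂(Q i)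
          ≤ ENNReal.ofReal ε ∧
        t = (N : ℝ≥0∞)⁻¹ * ∑ i, expLoss n m k β₀ βN βC (Q i)} := by
  classical
  have hNne : (N : ℝ≥0∞) ≠ 0 := Nat.cast_ne_zero.mpr hN.ne'
  have hNtop : (N : ℝ≥0∞) ≠ ⊤ := ENNReal.natCast_ne_top N
  have hnrm0 : nrm 0 = 0 := DRLRAux.nrm_zero hnrm_def
  have hcont : Continuous nrm := DRLRAux.nrm_continuous hnrm_def hnrm_smul hnrm_add
  have hgpair : Measurable (fun q : Amb n m k × Amb n m k =>
      ENNReal.ofReal (gdist n m k nrm κ p q.1 q.2)) :=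
    DRLRAux.measurable_gdist_pair nrm hcont κ p hp
  have hcostm : Measurable (fun q : Xi n m k × Xi n m k =>
      ENNReal.ofReal (gdist n m k nrm κ p q.1.1 q.2.1)) :=
    hgpair.comp ((measurable_subtype_coe.comp measurable_fst).prodMk
      (measurable_subtype_coe.comp measurable_snd))
  have hcosti : ∀ w : Xi n m k, Measurable (fun ξ : Xi n m k =>
      ENNReal.ofReal (gdist n m k nrm κ p ξ.1 w.1)) := fun w =>
    hgpair.comp (measurable_subtype_coe.prodMk measurable_const)
  have hlossm : Measurable (fun ξ : Xi n m k =>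
      ENNReal.ofReal (logloss n m k β₀ βN βC ξ.1)) :=
    (DRLRAux.measurable_logloss β₀ βN βC).comp measurable_subtype_coe
  have hgself : ∀ ξ : Xi n m k, ENNReal.ofReal (gdist n m k nrm κ p ξ.1 ξ.1) = 0 := by
    intro ξ
    rw [DRLRAux.gdist_self nrm hnrm0 κ p hp.ne']
    simp
  apply le_antisymm
  · -- worst case ≤ decomposed sup
    rw [worstCase]
    apply sSup_le
    rintro t ⟨Q, hQprob, hW, rfl⟩
    apply ENNReal.le_of_forall_lt_one_mul_le
    intro a ha
    rcases eq_or_ne a 0 with rfl | ha0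
    · simp
    have hatop : a ≠ ⊤ := ha.ne_top
    set εE := ENNReal.ofReal ε with hεE
    have hεE0 : εE ≠ 0 := (ENNReal.ofReal_pos.mpr hε).ne'
    have hεEtop : εE ≠ ⊤ := ENNReal.ofReal_ne_top
    set δ : ℝ≥0∞ := a⁻¹ * ((1 - a) * εE) with hδdef
    have hδ0 : δ ≠ 0 := by
      apply mul_ne_zero (ENNReal.inv_ne_zero.mpr hatop)
      exact mul_ne_zero (tsub_pos_of_lt ha).ne' hεE0
    obtain ⟨π, hπmem, hπcost⟩ : ∃ π ∈ couplings n m k Q (empMeasure n m k N ξdata),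
        ∫⁻ q, ENNReal.ofReal (gdist n m k nrm κ p q.1.1 q.2.1) ∂π < εE + δ := by
      by_contra hcon
      push_neg at hcon
      have hge : εE + δ ≤ wass n m k nrm κ p Q (empMeasure n m k N ξdata) := by
        rw [wass]
        exact le_iInf₂ hcon
      exact absurd (lt_of_le_of_lt hW (ENNReal.lt_add_right hεEtop hδ0)) (not_lt.mpr hge)
    obtain ⟨hπprob, hπfst, hπsnd⟩ := hπmem
    set S : Fin N → Set (Xi n m k × Xi n m k) := fun i => Prod.snd ⁻¹' {ξdata i} with hSdef
    have hSm : ∀ i, MeasurableSet (S i) := fun i => measurable_snd (measurableSet_singleton _)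
    set c : Fin N → ℝ≥0∞ := fun i => π (S i) with hcdef
    set M : Fin N → ℕ := fun i => (Finset.univ.filter fun j => ξdata j = ξdata i).card with hMdef
    have hM0 : ∀ i, (M i : ℝ≥0∞) ≠ 0 := by
      intro i
      have hmem : i ∈ Finset.univ.filter fun j => ξdata j = ξdata i :=
        Finset.mem_filter.mpr ⟨Finset.mem_univ _, rfl⟩
      exact Nat.cast_ne_zero.mpr (Finset.card_ne_zero_of_mem hmem)
    have hcM : ∀ i, c i = (N : ℝ≥0∞)⁻¹ * (M i) := by
      intro i
      have h1 : c i = π.snd {ξdata i} :=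
        (Measure.snd_apply (measurableSet_singleton _)).symm
      rw [h1, hπsnd, empMeasure]
      simp only [Measure.smul_apply, Measure.finset_sum_apply, smul_eq_mul]
      congr 1
      have h2 : ∀ j ∈ Finset.univ, Measure.dirac (ξdata j) {ξdata i}
          = if ξdata j = ξdata i then (1 : ℝ≥0∞) else 0 := by
        intro j _
        rw [Measure.dirac_apply' _ (measurableSet_singleton _)]
        by_cases h : ξdata j = ξdata i <;> simp [h]
      rw [Finset.sum_congr rfl h2, Finset.sum_boole]
    have hc0 : ∀ i, c i ≠ 0 := by
      intro i
      rw [hcM i]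
      exact mul_ne_zero (ENNReal.inv_ne_zero.mpr hNtop) (hM0 i)
    have hctop : ∀ i, c i ≠ ⊤ := by
      intro i
      rw [hcM i]
      exact ENNReal.mul_ne_top (ENNReal.inv_ne_top.mpr hNne) (ENNReal.natCast_ne_top _)
    set Qi : Fin N → Measure (Xi n m k) := fun i => (c i)⁻¹ • ((π.restrict (S i)).fst)
      with hQidef
    have hQint : ∀ i (g : Xi n m k → ℝ≥0∞), Measurable g →
        ∫⁻ ξ, g ξ ∂(Qi i) = (c i)⁻¹ * ∫⁻ q in S i, g q.1 ∂π := by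
      intro i g hg
      rw [hQidef]
      simp only [lintegral_smul_measure, smul_eq_mul]
      rw [Measure.fst, lintegral_map hg measurable_fst]
    have hQiprob : ∀ i, IsProbabilityMeasure (Qi i) := by
      intro i
      constructor
      rw [hQidef]
      simp only [Measure.smul_apply, smul_eq_mul]
      rw [Measure.fst_univ, Measure.restrict_apply_univ]
      exact ENNReal.inv_mul_cancel (hc0 i) (hctop i)
    -- key decomposition identity
    have key : ∀ g : (Xi n m k × Xi n m k) → ℝ≥0∞, Measurable g →
        ∑ i, (N : ℝ≥0∞)⁻¹ * ((c i)⁻¹ * ∫⁻ q in S i, g q ∂π) = ∫⁻ q, g q ∂π := by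
      intro g hg
      have hNc : ∀ i, (N : ℝ≥0∞)⁻¹ * (c i)⁻¹ = ((M i : ℝ≥0∞))⁻¹ := by
        intro i
        rw [hcM i, ENNReal.mul_inv (Or.inl (ENNReal.inv_ne_zero.mpr hNtop))
          (Or.inl (ENNReal.inv_ne_top.mpr hNne)), inv_inv, ← mul_assoc,
          ENNReal.inv_mul_cancel hNne hNtop, one_mul]
      have hterm : ∀ i, (N : ℝ≥0∞)⁻¹ * ((c i)⁻¹ * ∫⁻ q in S i, g q ∂π)
          = ∫⁻ q, (S i).indicator (fun q => ((M i : ℝ≥0∞))⁻¹ * g q) q ∂π := by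
        intro i
        rw [lintegral_indicator (hSm i), lintegral_const_mul' _ _
          (ENNReal.inv_ne_top.mpr (hM0 i)), ← mul_assoc, hNc i]
      rw [Finset.sum_congr rfl fun i _ => hterm i, ← lintegral_finset_sum _
        (fun i _ => (Measurable.const_mul hg _).indicator (hSm i))]
      apply lintegral_congr_ae
      have hrange : MeasurableSet (Set.range ξdata) := (Set.finite_range ξdata).measurableSet
      have hnull : π {q : Xi n m k × Xi n m k | ¬ q.2 ∈ Set.range ξdata} = 0 := by
        have hpre : {q : Xi n m k × Xi n m k | ¬ q.2 ∈ Set.range ξdata}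
            = Prod.snd ⁻¹' (Set.range ξdata)ᶜ := rfl
        rw [hpre, ← Measure.snd_apply hrange.compl, hπsnd, empMeasure]
        simp only [Measure.smul_apply, Measure.finset_sum_apply, smul_eq_mul]
        have hz : ∀ j ∈ Finset.univ,
            Measure.dirac (ξdata j) (Set.range ξdata)ᶜ = 0 := by
          intro j _
          rw [Measure.dirac_apply' _ hrange.compl]
          exact Set.indicator_of_notMem (by simp [Set.mem_range_self]) _
        rw [Finset.sum_congr rfl hz]
        simp
      have hae : ∀ᵐ q ∂π, q.2 ∈ Set.range ξdata := by
        rw [ae_iff]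
        exact hnull
      filter_upwards [hae] with q hq
      obtain ⟨i₀, hi₀⟩ := hq
      have hind : ∀ i, (S i).indicator (fun q => ((M i : ℝ≥0∞))⁻¹ * g q) q
          = (if ξdata i = q.2 then ((M i : ℝ≥0∞))⁻¹ else 0) * g q := by
        intro i
        by_cases h : q ∈ S i
        · have h' : q.2 = ξdata i := h
          rw [Set.indicator_of_mem h, if_pos h'.symm]
        · have h' : ¬ (ξdata i = q.2) := fun hh => h (show q.2 = ξdata i from hh.symm)
          rw [Set.indicator_of_notMem h, if_neg h', zero_mul]
      rw [Finset.sum_congr rfl fun i _ => hind i, ← Finset.sum_mul]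
      have hone : (∑ i, if ξdata i = q.2 then ((M i : ℝ≥0∞))⁻¹ else 0) = 1 := by
        rw [← Finset.sum_filter]
        have hcard : ∀ i ∈ Finset.univ.filter (fun i => ξdata i = q.2), ((M i : ℝ≥0∞))⁻¹
            = (((Finset.univ.filter (fun i => ξdata i = q.2)).card : ℝ≥0∞))⁻¹ := by
          intro i hi
          have hi' : ξdata i = q.2 := (Finset.mem_filter.mp hi).2
          have hMi : M i = (Finset.univ.filter (fun i => ξdata i = q.2)).card := by
            have hfe : Finset.univ.filter (fun j => ξdata j = ξdata i)
                = Finset.univ.filter (fun j => ξdata j = q.2) :=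
              Finset.filter_congr (fun j _ => by simp [hi'])
            simp only [hMdef]
            rw [hfe]
          rw [hMi]
        rw [Finset.sum_congr rfl hcard, Finset.sum_const, nsmul_eq_mul]
        have hFne : (Finset.univ.filter (fun i => ξdata i = q.2)).card ≠ 0 :=
          Finset.card_ne_zero_of_mem (Finset.mem_filter.mpr ⟨Finset.mem_univ _, hi₀⟩)
        exact ENNReal.mul_inv_cancel (Nat.cast_ne_zero.mpr hFne) (ENNReal.natCast_ne_top _)
      rw [hone, one_mul]
    -- cost identity
    have hcosteq : ∑ i, (N : ℝ≥0∞)⁻¹ *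
        ∫⁻ ξ, ENNReal.ofReal (gdist n m k nrm κ p ξ.1 (ξdata i).1) ∂(Qi i)
        = ∫⁻ q, ENNReal.ofReal (gdist n m k nrm κ p q.1.1 q.2.1) ∂π := by
      have h1 : ∀ i, ∫⁻ ξ, ENNReal.ofReal (gdist n m k nrm κ p ξ.1 (ξdata i).1) ∂(Qi i)
          = (c i)⁻¹ * ∫⁻ q in S i, ENNReal.ofReal (gdist n m k nrm κ p q.1.1 q.2.1) ∂π := by
        intro i
        rw [hQint i _ (hcosti (ξdata i))]
        congr 1
        apply setLIntegral_congr_fun (hSm i)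
        intro q hq
        have h2 : q.2 = ξdata i := hq
        simp only [h2]
      rw [Finset.sum_congr rfl fun i _ => by rw [h1 i]]
      exact key _ hcostm
    -- loss identity
    have hlosseq : ∑ i, (N : ℝ≥0∞)⁻¹ * expLoss n m k β₀ βN βC (Qi i)
        = expLoss n m k β₀ βN βC Q := by
      have h1 : ∀ i, expLoss n m k β₀ βN βC (Qi i)
          = (c i)⁻¹ * ∫⁻ q in S i,
              ENNReal.ofReal (logloss n m k β₀ βN βC q.1.1) ∂π :=
        fun i => hQint i _ hlossm
      rw [Finset.sum_congr rfl fun i _ => by rw [h1 i],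
        key (fun q : Xi n m k × Xi n m k => ENNReal.ofReal (logloss n m k β₀ βN βC q.1.1))
          (hlossm.comp measurable_fst)]
      rw [expLoss, ← hπfst, Measure.fst, lintegral_map hlossm measurable_fst]
    -- mixed measures
    set Qt : Fin N → Measure (Xi n m k) :=
      fun i => a • Qi i + (1 - a) • Measure.dirac (ξdata i) with hQtdef
    have hQtlint : ∀ i (g : Xi n m k → ℝ≥0∞),
        ∫⁻ ξ, g ξ ∂(Qt i) = a * ∫⁻ ξ, g ξ ∂(Qi i) + (1 - a) * g (ξdata i) := by
      intro i g
      rw [hQtdef]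
      simp only [lintegral_add_measure, lintegral_smul_measure, lintegral_dirac, smul_eq_mul]
    have hQtprob : ∀ i, IsProbabilityMeasure (Qt i) := by
      intro i
      constructor
      rw [hQtdef]
      simp only [Measure.add_apply, Measure.smul_apply, smul_eq_mul,
        (hQiprob i).measure_univ, Measure.dirac_apply_of_mem (Set.mem_univ (ξdata i)), mul_one]
      exact add_tsub_cancel_of_le ha.le
    have hQtcost : (N : ℝ≥0∞)⁻¹ * ∑ i, ∫⁻ ξ,
        ENNReal.ofReal (gdist n m k nrm κ p ξ.1 (ξdata i).1) ∂(Qt i) ≤ ENNReal.ofReal ε := by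
      have h2 : ∀ i, ∫⁻ ξ, ENNReal.ofReal (gdist n m k nrm κ p ξ.1 (ξdata i).1) ∂(Qt i)
          = a * ∫⁻ ξ, ENNReal.ofReal (gdist n m k nrm κ p ξ.1 (ξdata i).1) ∂(Qi i) := by
        intro i
        rw [hQtlint i _, hgself (ξdata i), mul_zero, add_zero]
      rw [Finset.sum_congr rfl fun i _ => h2 i]
      have h3 : (N : ℝ≥0∞)⁻¹ * ∑ i, a *
          ∫⁻ ξ, ENNReal.ofReal (gdist n m k nrm κ p ξ.1 (ξdata i).1) ∂(Qi i)
          = a * ∑ i, (N : ℝ≥0∞)⁻¹ *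
          ∫⁻ ξ, ENNReal.ofReal (gdist n m k nrm κ p ξ.1 (ξdata i).1) ∂(Qi i) := by
        rw [Finset.mul_sum, Finset.mul_sum]
        exact Finset.sum_congr rfl fun i _ => by ring
      rw [h3, hcosteq]
      refine le_trans (mul_le_mul_right hπcost.le a) ?_
      rw [mul_add, hδdef, ← mul_assoc, ENNReal.mul_inv_cancel ha0 hatop, one_mul,
        ← add_mul, add_tsub_cancel_of_le ha.le, one_mul]
    refine le_trans ?_ (le_sSup ⟨Qt, hQtprob, hQtcost, rfl⟩)
    rw [← hlosseq, Finset.mul_sum, Finset.mul_sum]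
    refine Finset.sum_le_sum fun i _ => ?_
    have hE : expLoss n m k β₀ βN βC (Qt i)
        = a * expLoss n m k β₀ βN βC (Qi i)
          + (1 - a) * ENNReal.ofReal (logloss n m k β₀ βN βC (ξdata i).1) :=
      hQtlint i _
    calc a * ((N : ℝ≥0∞)⁻¹ * expLoss n m k β₀ βN βC (Qi i))
        = (N : ℝ≥0∞)⁻¹ * (a * expLoss n m k β₀ βN βC (Qi i)) := by ring
      _ ≤ (N : ℝ≥0∞)⁻¹ * expLoss n m k β₀ βN βC (Qt i) := by
          refine mul_le_mul_right ?_ _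
          rw [hE]
          exact le_self_add
  · -- decomposed sup ≤ worst case
    apply sSup_le
    rintro t ⟨Q, hprob, hcost, rfl⟩
    rw [worstCase]
    have hQbar : IsProbabilityMeasure ((N : ℝ≥0∞)⁻¹ • ∑ i, Q i) := by
      constructor
      simp only [Measure.smul_apply, Measure.finset_sum_apply, smul_eq_mul]
      rw [Finset.sum_congr rfl fun i _ => (hprob i).measure_univ, Finset.sum_const,
        Finset.card_univ, Fintype.card_fin, nsmul_eq_mul, mul_one]
      exact ENNReal.inv_mul_cancel hNne hNtop
    apply le_sSup
    refine ⟨(N : ℝ≥0∞)⁻¹ • ∑ i, Q i, hQbar, ?_, ?_⟩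
    · -- Wasserstein bound
      set π : Measure (Xi n m k × Xi n m k) :=
        (N : ℝ≥0∞)⁻¹ • ∑ i, (Q i).map (fun ξ => (ξ, ξdata i)) with hπdef
      have hmapm : ∀ i, Measurable (fun ξ : Xi n m k => (ξ, ξdata i)) :=
        fun i => measurable_id.prodMk measurable_const
      have hπfst : π.fst = (N : ℝ≥0∞)⁻¹ • ∑ i, Q i := by
        rw [hπdef, DRLRAux.fst_smul, DRLRAux.fst_finset_sum]
        congr 1
        refine Finset.sum_congr rfl fun i _ => ?_
        rw [Measure.fst, Measure.map_map measurable_fst (hmapm i)]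
        exact Measure.map_id
      have hπsnd : π.snd = empMeasure n m k N ξdata := by
        rw [hπdef, DRLRAux.snd_smul, DRLRAux.snd_finset_sum, empMeasure]
        congr 1
        refine Finset.sum_congr rfl fun i _ => ?_
        rw [Measure.snd, Measure.map_map measurable_snd (hmapm i),
          show Prod.snd ∘ (fun ξ : Xi n m k => (ξ, ξdata i)) = fun _ => ξdata i from rfl,
          Measure.map_const, (hprob i).measure_univ, one_smul]
      have hπprob : IsProbabilityMeasure π := by
        constructor
        rw [← Measure.fst_univ, hπfst]
        exact hQbar.measure_univ
      have hπc : π ∈ couplings n m k ((N : ℝ≥0∞)⁻¹ • ∑ i, Q i)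
          (empMeasure n m k N ξdata) := ⟨hπprob, hπfst, hπsnd⟩
      calc wass n m k nrm κ p ((N : ℝ≥0∞)⁻¹ • ∑ i, Q i) (empMeasure n m k N ξdata)
          ≤ ∫⁻ q, ENNReal.ofReal (gdist n m k nrm κ p q.1.1 q.2.1) ∂π := by
            rw [wass]
            exact iInf₂_le π hπc
        _ = (N : ℝ≥0∞)⁻¹ *
            ∑ i, ∫⁻ ξ, ENNReal.ofReal (gdist n m k nrm κ p ξ.1 (ξdata i).1) ∂(Q i) := by
            rw [hπdef, lintegral_smul_measure, lintegral_finset_sum_measure]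
            congr 1
            refine Finset.sum_congr rfl fun i _ => ?_
            rw [(measurableEmbedding_prod_mk_right (ξdata i)).lintegral_map]
        _ ≤ ENNReal.ofReal ε := hcost
    · rw [expLoss, lintegral_smul_measure, lintegral_finset_sum_measure]
      rfl
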